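/- Algorithm 1 returns YES if and only if every L-resolvent of the candidate clause C = L ∨ C' with the partner clause D is valid, and it tests at most quadratically many resolvents: the procedure iterates over each literal N_k of D unifiable with ¬L, grows a set N of resolved literals, explicitly checks validity of the resolvent for each N, extends N only when every complementary pair in the current resolvent involves an instance of some Nᵢ, and breaks otherwise. -/

import Mathlib

/-- First-order terms over variables `V` and function symbols `Fn`. -/
inductive Term (V Fn : Type) : Type
  | var : V → Term V Fn
  | app : Fn → List (Term V Fn) → Term V Fn

/-- A substitution maps variables to terms. -/
abbrev Subst (V Fn : Type) := V → Term V Fn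

/-- Applying a substitution to a term. -/
def Term.subst {V Fn : Type} (σ : Subst V Fn) : Term V Fn → Term V Fn
  | .var v => σ v
  | .app f ts => .app f (ts.attach.map (fun t => Term.subst σ t.1))
  decreasing_by have := List.sizeOf_lt_of_mem t.2; simp at *; omega

/-- The set of variables occurring in a term. -/
def Term.vars {V Fn : Type} : Term V Fn → Set V
  | .var v => {v}
  | .app _ ts => {x | ∃ t ∈ ts.attach, x ∈ Term.vars t.1}
  decreasing_by have := List.sizeOf_lt_of_mem t.2; simp at *; omega

/-- A term is ground if it contains no variables. -/
def Term.IsGround {V Fn : Type} (t : Term V Fn) : Prop := t.vars = ∅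

/-- Composition of substitutions: `σ.comp γ` is "first σ, then γ". -/
def Subst.comp {V Fn : Type} (σ γ : Subst V Fn) : Subst V Fn :=
  fun v => (σ v).subst γ

/-- An atom: a predicate symbol applied to a list of argument terms. -/
structure Atom (V Fn P : Type) where
  pred : P
  args : List (Term V Fn)

/-- A literal: an atom with a polarity (`true` = positive). -/
structure Lit (V Fn P : Type) where
  pol : Bool
  atom : Atom V Fn P

/-- The complement of a literal. -/
def Lit.compl {V Fn P : Type} (l : Lit V Fn P) : Lit V Fn P := ⟨!l.pol, l.atom⟩

def Atom.subst {V Fn P : Type} (σ : Subst V Fn) (A : Atom V Fn P) : Atom V Fn P :=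
  ⟨A.pred, A.args.map (Term.subst σ)⟩

def Lit.subst {V Fn P : Type} (σ : Subst V Fn) (l : Lit V Fn P) : Lit V Fn P :=
  ⟨l.pol, l.atom.subst σ⟩

/-- A clause is a multiset (disjunction) of literals. -/
abbrev Clause (V Fn P : Type) := Multiset (Lit V Fn P)

def Clause.subst {V Fn P : Type} (σ : Subst V Fn) (C : Clause V Fn P) : Clause V Fn P :=
  C.map (Lit.subst σ)

def Atom.vars {V Fn P : Type} (A : Atom V Fn P) : Set V := {x | ∃ t ∈ A.args, x ∈ t.vars}
def Lit.vars {V Fn P : Type} (l : Lit V Fn P) : Set V := l.atom.vars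
def Clause.vars {V Fn P : Type} (C : Clause V Fn P) : Set V := {x | ∃ l ∈ C, x ∈ l.vars}

/-- A clause is ground if it contains no variables. -/
def Clause.IsGround {V Fn P : Type} (C : Clause V Fn P) : Prop := C.vars = ∅

/-- A substitution `σ` unifies a list of literals if it maps them all to the same literal. -/
def IsUnifier {V Fn P : Type} (σ : Subst V Fn) (ls : List (Lit V Fn P)) : Prop :=
  ∀ l₁ ∈ ls, ∀ l₂ ∈ ls, l₁.subst σ = l₂.subst σ

/-- A most general unifier: every unifier factors through it. -/
def IsMGU {V Fn P : Type} (σ : Subst V Fn) (ls : List (Lit V Fn P)) : Prop :=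
  IsUnifier σ ls ∧ ∀ τ, IsUnifier τ ls → ∃ γ, σ.comp γ = τ

/-- Validity of an equality-free clause: it contains a complementary pair of literals. -/
def Clause.ValidEF {V Fn P : Type} (C : Clause V Fn P) : Prop :=
  ∃ A : Atom V Fn P, (⟨true, A⟩ : Lit V Fn P) ∈ C ∧ (⟨false, A⟩ : Lit V Fn P) ∈ C

/-- `C` (written as `L ∨ C'`) is blocked by `L` in `F`: all `L`-resolvents with clauses
of `F \ {L ∨ C'}` are valid. -/
def BlockedEF {V Fn P : Type} (L : Lit V Fn P) (C' : Clause V Fn P)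
    (F : Set (Clause V Fn P)) : Prop :=
  ∀ D ∈ F, D ≠ L ::ₘ C' → ∀ Ns Drest : Clause V Fn P, Ns + Drest = D → Ns ≠ 0 →
    ∀ σ : Subst V Fn, IsMGU σ (L :: (Ns.map Lit.compl).toList) →
      Clause.ValidEF (C'.subst σ + Drest.subst σ)

/-- A propositional assignment on (ground) atoms. -/
abbrev PAssign (V Fn P : Type) := Atom V Fn P → Bool

def litTrue {V Fn P : Type} (α : PAssign V Fn P) (l : Lit V Fn P) : Prop :=
  α l.atom = l.pol

/-- Propositional satisfaction of a (ground) clause. -/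
def satC {V Fn P : Type} (α : PAssign V Fn P) (C : Clause V Fn P) : Prop :=
  ∃ l ∈ C, litTrue α l

/-- A first-order interpretation. -/
structure Interp (Fn P : Type) : Type 1 where
  dom : Type
  nonempty : Nonempty dom
  fn : Fn → List dom → dom
  pr : P → List dom → Prop

def Term.eval {V Fn P : Type} (I : Interp Fn P) (ρ : V → I.dom) : Term V Fn → I.dom
  | .var v => ρ v
  | .app f ts => I.fn f (ts.attach.map (fun t => Term.eval I ρ t.1))
  decreasing_by have := List.sizeOf_lt_of_mem t.2; simp at *; omega

def litHolds {V Fn P : Type} (I : Interp Fn P) (ρ : V → I.dom) (l : Lit V Fn P) : Prop :=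
  l.pol = true ↔ I.pr l.atom.pred (l.atom.args.map (Term.eval I ρ))

def clauseHolds {V Fn P : Type} (I : Interp Fn P) (ρ : V → I.dom) (C : Clause V Fn P) : Prop :=
  ∃ l ∈ C, litHolds I ρ l

/-- First-order satisfiability of a CNF formula (clauses implicitly universally quantified). -/
def SatEF {V Fn P : Type} (F : Set (Clause V Fn P)) : Prop :=
  ∃ I : Interp Fn P, ∀ C ∈ F, ∀ ρ : V → I.dom, clauseHolds I ρ C


open Classical in
/-- Multiset difference of clauses (classically). -/
noncomputable def msub {V Fn P : Type} (C N : Clause V Fn P) : Clause V Fn P :=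
  letI := Classical.decEq (Lit V Fn P); C - N

/-- The unification problem of `L` with the complements of the literals of `M`. -/
noncomputable def prob {V Fn P : Type} (L : Lit V Fn P) (M : Clause V Fn P) : List (Lit V Fn P) :=
  L :: (M.map Lit.compl).toList

/-- The `L`-resolvent of `L ∨ C'` with `D`, resolving away the literals `M ⊆ D` via `σ`. -/
noncomputable def resOf {V Fn P : Type} (L : Lit V Fn P) (C' D M : Clause V Fn P) (σ : Subst V Fn) :
    Clause V Fn P :=
  C'.subst σ + (msub D M).subst σ

/-- The literals `Nᵢ ∈ Ns \ M` whose instance `Nᵢσ` takes part in a complementary pair of the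
current resolvent: Algorithm 1 extends the resolved set `M` by exactly these. -/
noncomputable def extSet {V Fn P : Type} (L : Lit V Fn P) (C' D Ns : Clause V Fn P)
    (sel : Clause V Fn P → Subst V Fn) (M : Clause V Fn P) : Clause V Fn P :=
  letI : DecidablePred fun Ni : Lit V Fn P =>
      (Ni.subst (sel M)).compl ∈ resOf L C' D M (sel M) :=
    fun _ => Classical.propDecidable _
  (msub Ns M).filter fun Ni => (Ni.subst (sel M)).compl ∈ resOf L C' D M (sel M)

/-- The resolved sets `M` visited by Algorithm 1 (with mgu selector `sel`): it starts from each
singleton `{Nₖ}`, explicitly tests the corresponding resolvent for validity, and grows `M`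
(only) when every complementary pair of the resolvent involves an instance `Nᵢσ`. -/
inductive Visited {V Fn P : Type} (L : Lit V Fn P) (C' D Ns : Clause V Fn P)
    (sel : Clause V Fn P → Subst V Fn) : Clause V Fn P → Prop
  | init (N : Lit V Fn P) (h : N ∈ Ns) : Visited L C' D Ns sel {N}
  | step (M : Clause V Fn P) (h : Visited L C' D Ns sel M)
      (hu : ∃ σ, IsUnifier σ (prob L M))
      (hval : Clause.ValidEF (resOf L C' D M (sel M)))
      (hall : ∀ A : Atom V Fn P, (⟨true, A⟩ : Lit V Fn P) ∈ resOf L C' D M (sel M) →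
          (⟨false, A⟩ : Lit V Fn P) ∈ resOf L C' D M (sel M) →
          ∃ Ni ∈ msub Ns M, Ni.subst (sel M) = (⟨true, A⟩ : Lit V Fn P) ∨
            Ni.subst (sel M) = (⟨false, A⟩ : Lit V Fn P))
      (hne : extSet L C' D Ns sel M ≠ 0) :
      Visited L C' D Ns sel (M + extSet L C' D Ns sel M)

section Helpers
variable {V Fn P : Type}

theorem Term.subst_app (σ : Subst V Fn) (f : Fn) (ts : List (Term V Fn)) :
    Term.subst σ (.app f ts) = .app f (ts.map (Term.subst σ)) := by
  rw [Term.subst]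
  congr 1
  simp

theorem Term.subst_subst (σ γ : Subst V Fn) :
    ∀ t : Term V Fn, Term.subst γ (Term.subst σ t) = Term.subst (σ.comp γ) t
  | .var v => by simp [Term.subst, Subst.comp]
  | .app f ts => by
    rw [Term.subst_app, Term.subst_app, Term.subst_app, List.map_map]
    exact congrArg _ (List.map_congr_left fun t ht => Term.subst_subst σ γ t)
  decreasing_by have := List.sizeOf_lt_of_mem ht; simp at *; omega

theorem Atom.subst_subst (σ γ : Subst V Fn) (A : Atom V Fn P) :
    (A.subst σ).subst γ = A.subst (σ.comp γ) := by
  simp [Atom.subst, List.map_map, Function.comp_def, Term.subst_subst]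

theorem Lit.subst_subst (σ γ : Subst V Fn) (l : Lit V Fn P) :
    (l.subst σ).subst γ = l.subst (σ.comp γ) := by
  simp [Lit.subst, Atom.subst_subst]

theorem Lit.compl_subst (σ : Subst V Fn) (l : Lit V Fn P) :
    (l.subst σ).compl = l.compl.subst σ := rfl

theorem mem_prob {l L : Lit V Fn P} {M : Clause V Fn P} :
    l ∈ prob L M ↔ l = L ∨ ∃ N ∈ M, N.compl = l := by
  simp [prob]

theorem unifier_mono {σ : Subst V Fn} {L : Lit V Fn P} {M' M : Clause V Fn P} (h : M' ≤ M)
    (hu : IsUnifier σ (prob L M)) : IsUnifier σ (prob L M') := by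
  intro l1 h1 l2 h2
  apply hu <;> rw [mem_prob] at *
  · rcases h1 with h1 | ⟨N, hN, hNe⟩
    · exact Or.inl h1
    · exact Or.inr ⟨N, Multiset.mem_of_le h hN, hNe⟩
  · rcases h2 with h2 | ⟨N, hN, hNe⟩
    · exact Or.inl h2
    · exact Or.inr ⟨N, Multiset.mem_of_le h hN, hNe⟩

theorem unifier_eq {σ : Subst V Fn} {L N : Lit V Fn P} {M : Clause V Fn P}
    (hu : IsUnifier σ (prob L M)) (hN : N ∈ M) :
    Lit.subst σ N.compl = Lit.subst σ L :=
  hu _ (mem_prob.2 (Or.inr ⟨N, hN, rfl⟩)) _ (mem_prob.2 (Or.inl rfl))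

theorem pol_of_unif {σ : Subst V Fn} {L N : Lit V Fn P}
    (h : IsUnifier σ (prob L ({N} : Clause V Fn P))) : N.pol = !L.pol := by
  have h1 := unifier_eq h (Multiset.mem_singleton_self N)
  have h2 : (!N.pol) = L.pol := congrArg Lit.pol h1
  cases hL : L.pol <;> rw [hL] at h2 <;> simp_all

theorem msub_eq [inst : DecidableEq (Lit V Fn P)] (C N : Clause V Fn P) : msub C N = C - N := by
  rw [Subsingleton.elim inst (Classical.decEq _)]
  rfl

theorem mem_msub [inst : DecidableEq (Lit V Fn P)] {a : Lit V Fn P} {C N : Clause V Fn P} :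
    a ∈ msub C N ↔ N.count a < C.count a := by
  rw [msub_eq, ← Multiset.count_pos, Multiset.count_sub]
  omega

theorem count_msub [inst : DecidableEq (Lit V Fn P)] (a : Lit V Fn P) (C N : Clause V Fn P) :
    (msub C N).count a = C.count a - N.count a := by
  rw [msub_eq, Multiset.count_sub]

theorem mem_extSet {L : Lit V Fn P} {C' D Ns : Clause V Fn P} {sel : Clause V Fn P → Subst V Fn}
    {M : Clause V Fn P} {a : Lit V Fn P} :
    a ∈ extSet L C' D Ns sel M ↔
      a ∈ msub Ns M ∧ (a.subst (sel M)).compl ∈ resOf L C' D M (sel M) := by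
  rw [extSet]
  exact @Multiset.mem_filter _ _ (fun _ => Classical.propDecidable _) _ _

theorem valid_of_compl {C : Clause V Fn P} {l : Lit V Fn P} (h1 : l ∈ C) (h2 : l.compl ∈ C) :
    C.ValidEF := by
  rcases l with ⟨b, A⟩
  cases b
  · exact ⟨A, h2, h1⟩
  · exact ⟨A, h1, h2⟩

theorem transfer {L : Lit V Fn P} {C' D M Mi : Clause V Fn P} {σi γ σ : Subst V Fn}
    (hcomp : σi.comp γ = σ) {l : Lit V Fn P} (hmem : l ∈ resOf L C' D Mi σi)
    (hK : ∀ K ∈ msub M Mi, Lit.subst σi K ≠ l) :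
    l.subst γ ∈ resOf L C' D M σ := by
  letI := Classical.decEq (Lit V Fn P)
  rcases Multiset.mem_add.1 hmem with h | h
  · rcases Multiset.mem_map.1 h with ⟨e, he, rfl⟩
    exact Multiset.mem_add.2 (Or.inl (Multiset.mem_map.2
      ⟨e, he, by rw [Lit.subst_subst, hcomp]⟩))
  · rcases Multiset.mem_map.1 h with ⟨K, hKmem, rfl⟩
    have hKD : K ∈ msub D M := by
      classical
      by_contra hc
      refine hK K ?_ rfl
      rw [mem_msub] at *
      omega
    exact Multiset.mem_add.2 (Or.inr (Multiset.mem_map.2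
      ⟨K, hKD, by rw [Lit.subst_subst, hcomp]⟩))

end Helpers
section Helpers2
variable {V Fn P : Type}

theorem extSet_le (L : Lit V Fn P) (C' D Ns : Clause V Fn P) (sel : Clause V Fn P → Subst V Fn)
    (M : Clause V Fn P) : extSet L C' D Ns sel M ≤ msub Ns M := by
  rw [extSet]; exact @Multiset.filter_le _ _ (fun _ => Classical.propDecidable _) _

theorem visited_inv {L : Lit V Fn P} {C' D Ns : Clause V Fn P} {sel : Clause V Fn P → Subst V Fn}
    {M : Clause V Fn P} (h : Visited L C' D Ns sel M) : M ≤ Ns ∧ M ≠ 0 := by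
  induction h with
  | init N hN => exact ⟨Multiset.singleton_le.2 hN, by simp⟩
  | step M h hu hval hall hne ih =>
    letI := Classical.decEq (Lit V Fn P)
    constructor
    · calc M + extSet L C' D Ns sel M ≤ M + msub Ns M := by
            exact add_le_add le_rfl (extSet_le L C' D Ns sel M)
        _ = Ns := by show M + (Ns - M) = Ns; exact add_tsub_cancel_of_le ih.1
    · intro hc
      exact ih.2 (Multiset.le_zero.1 (hc ▸ Multiset.le_add_right M _))

theorem visited_rep {L : Lit V Fn P} {C' D Ns : Clause V Fn P} {sel : Clause V Fn P → Subst V Fn}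
    {M : Clause V Fn P} (h : Visited L C' D Ns sel M) :
    ∃ N ∈ Ns, ∃ k, k + 1 ≤ Multiset.card M ∧ k + 1 ≤ Multiset.card Ns ∧
      M = (fun X => X + extSet L C' D Ns sel X)^[k] ({N} : Clause V Fn P) := by
  induction h with
  | init N hN =>
    refine ⟨N, hN, 0, by simp, ?_, rfl⟩
    have : 0 < Multiset.card Ns := Multiset.card_pos.2 (by rintro rfl; simp at hN)
    omega
  | step M h hu hval hall hne ih =>
    obtain ⟨N, hN, k, hk1, hk2, hEq⟩ := ih
    have hext : 0 < Multiset.card (extSet L C' D Ns sel M) := Multiset.card_pos.2 hne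
    have hcard : Multiset.card (M + extSet L C' D Ns sel M) =
        Multiset.card M + Multiset.card (extSet L C' D Ns sel M) := Multiset.card_add _ _
    have hle : M + extSet L C' D Ns sel M ≤ Ns :=
      (visited_inv (Visited.step M h hu hval hall hne)).1
    have hcle := Multiset.card_le_card hle
    refine ⟨N, hN, k + 1, by omega, by omega, ?_⟩
    rw [Function.iterate_succ_apply', ← hEq]

end Helpers2
section Helpers3
variable {V Fn P : Type}

theorem forward_step {L : Lit V Fn P} {C' Ns Drest : Clause V Fn P}
    {sel : Clause V Fn P → Subst V Fn}
    (hNs : ∀ N ∈ Ns, ∃ σ, IsUnifier σ (prob L {N}))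
    (hsel : ∀ M : Clause V Fn P, (∃ σ, IsUnifier σ (prob L M)) → IsMGU (sel M) (prob L M))
    (halg : ∀ M : Clause V Fn P, Visited L C' (Ns + Drest) Ns sel M →
        (∃ σ, IsUnifier σ (prob L M)) →
        Clause.ValidEF (resOf L C' (Ns + Drest) M (sel M)))
    {M : Clause V Fn P} (hMNs : M ≤ Ns) {σ : Subst V Fn} (hσu : IsUnifier σ (prob L M))
    {Mi : Clause V Fn P} (hvis : Visited L C' (Ns + Drest) Ns sel Mi) (hle : Mi ≤ M) :
    Clause.ValidEF (resOf L C' (Ns + Drest) M σ) ∨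
      (Visited L C' (Ns + Drest) Ns sel (Mi + extSet L C' (Ns + Drest) Ns sel Mi) ∧
       Mi + extSet L C' (Ns + Drest) Ns sel Mi ≤ M ∧
       extSet L C' (Ns + Drest) Ns sel Mi ≠ 0) := by
  letI := Classical.decEq (Lit V Fn P)
  set D := Ns + Drest with hD
  have hui : IsUnifier σ (prob L Mi) := unifier_mono hle hσu
  have hexi : ∃ τ, IsUnifier τ (prob L Mi) := ⟨σ, hui⟩
  obtain ⟨γ, hγ⟩ := (hsel Mi hexi).2 σ hui
  have hvalMi : Clause.ValidEF (resOf L C' D Mi (sel Mi)) := halg Mi hvis hexi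
  have hMsubNs : ∀ K ∈ msub M Mi, K ∈ msub Ns Mi := by
    intro K hK
    rw [mem_msub] at *
    have := Multiset.count_le_of_le K hMNs
    omega
  by_cases hall : ∀ A : Atom V Fn P, (⟨true, A⟩ : Lit V Fn P) ∈ resOf L C' D Mi (sel Mi) →
      (⟨false, A⟩ : Lit V Fn P) ∈ resOf L C' D Mi (sel Mi) →
      ∃ Ni ∈ msub Ns Mi, Ni.subst (sel Mi) = (⟨true, A⟩ : Lit V Fn P) ∨
        Ni.subst (sel Mi) = (⟨false, A⟩ : Lit V Fn P)
  case neg =>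
    left
    push_neg at hall
    obtain ⟨A, ht, hf, hno⟩ := hall
    have t1 := transfer hγ ht (fun K hK => (hno K (hMsubNs K hK)).1)
    have t2 := transfer hγ hf (fun K hK => (hno K (hMsubNs K hK)).2)
    exact ⟨A.subst γ, t1, t2⟩
  case pos =>
    obtain ⟨A, ht, hf⟩ := hvalMi
    obtain ⟨Ni, hNi, hcase⟩ := hall A ht hf
    have hNiext : Ni ∈ extSet L C' D Ns sel Mi := by
      rw [mem_extSet]
      refine ⟨hNi, ?_⟩
      rcases hcase with h | h <;> rw [h]
      · exact hf
      · exact ht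
    have hne : extSet L C' D Ns sel Mi ≠ 0 := fun h => by rw [h] at hNiext; simp at hNiext
    by_cases hsub : Mi + extSet L C' D Ns sel Mi ≤ M
    · right
      exact ⟨Visited.step Mi hvis hexi (halg Mi hvis hexi) hall hne, hsub, hne⟩
    · left
      obtain ⟨Nj, hcnt⟩ : ∃ a, Multiset.count a M <
          Multiset.count a (Mi + extSet L C' D Ns sel Mi) := by
        by_contra hc
        push_neg at hc
        exact hsub (Multiset.le_iff_count.2 hc)
      rw [Multiset.count_add] at hcnt
      have hcMi := Multiset.count_le_of_le Nj hle
      have hNjext : Nj ∈ extSet L C' D Ns sel Mi := by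
        rw [← Multiset.count_pos]; omega
      obtain ⟨hNjsub, hNjres⟩ := mem_extSet.1 hNjext
      have c1 : Multiset.count Nj Mi < Multiset.count Nj Ns := mem_msub.1 hNjsub
      have hNjNs : Nj ∈ Ns := by rw [← Multiset.count_pos]; omega
      obtain ⟨τ, hτ⟩ := hNs Nj hNjNs
      have hpolNj : Nj.pol = !L.pol := pol_of_unif hτ
      -- transfer (Nj σi).compl to the big resolvent
      have h1 : ((Nj.subst (sel Mi)).compl).subst γ ∈ resOf L C' D M σ := by
        refine transfer hγ hNjres ?_
        intro K hK heq
        have hKM : K ∈ M := by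
          rw [mem_msub] at hK; rw [← Multiset.count_pos]; omega
        have hKL := unifier_eq hσu hKM
        have h := congrArg (Lit.subst γ) heq
        rw [Lit.compl_subst] at h
        rw [Lit.subst_subst, Lit.subst_subst, hγ] at h
        have p1 : K.pol = !Nj.pol := congrArg Lit.pol h
        have p2 : (!K.pol) = L.pol := congrArg Lit.pol hKL
        rw [hpolNj] at p1
        cases hLp : L.pol <;> rw [hLp] at p1 p2 <;> simp_all
      have c2 : Multiset.count Nj (extSet L C' D Ns sel Mi) ≤
          Multiset.count Nj (msub Ns Mi) :=
        Multiset.count_le_of_le _ (extSet_le L C' D Ns sel Mi)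
      have c3 := count_msub Nj Ns Mi
      have c4 : Multiset.count Nj D = Multiset.count Nj Ns + Multiset.count Nj Drest := by
        rw [hD, Multiset.count_add]
      have hmem : Nj ∈ msub D M := mem_msub.2 (by omega)
      have h2 : Lit.subst σ Nj ∈ resOf L C' D M σ :=
        Multiset.mem_add.2 (Or.inr (Multiset.mem_map.2 ⟨Nj, hmem, rfl⟩))
      rw [Lit.compl_subst, Lit.subst_subst, hγ, ← Lit.compl_subst] at h1
      exact valid_of_compl h2 h1

end Helpers3
/-- Algorithm 1 returns YES (i.e., every explicitly tested resolvent along its traversal is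
valid) if and only if every `L`-resolvent of `C = L ∨ C'` with `D = Ns + Drest` is valid;
moreover it tests at most quadratically many resolvents. -/
theorem stmt16 {V Fn P : Type} (L : Lit V Fn P) (C' Ns Drest : Clause V Fn P)
    (sel : Clause V Fn P → Subst V Fn)
    -- `Ns` are exactly the literals of `D` unifying (pairwise) with `¬L`
    (hNs : ∀ N ∈ Ns, ∃ σ, IsUnifier σ (prob L {N}))
    (hDrest : ∀ M ∈ Drest, ¬ ∃ σ, IsUnifier σ (prob L {M}))
    -- `sel` picks a most general unifier whenever one exists
    (hsel : ∀ M : Clause V Fn P, (∃ σ, IsUnifier σ (prob L M)) → IsMGU (sel M) (prob L M)) :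
    ((∀ M : Clause V Fn P, Visited L C' (Ns + Drest) Ns sel M →
        (∃ σ, IsUnifier σ (prob L M)) →
        Clause.ValidEF (resOf L C' (Ns + Drest) M (sel M))) ↔
     (∀ M : Clause V Fn P, M ≤ Ns → M ≠ 0 → ∀ σ : Subst V Fn, IsMGU σ (prob L M) →
        Clause.ValidEF (resOf L C' (Ns + Drest) M σ))) ∧
    {M : Clause V Fn P | Visited L C' (Ns + Drest) Ns sel M}.ncard ≤
      Multiset.card Ns * Multiset.card Ns := by
  letI := Classical.decEq (Lit V Fn P)
  letI := Classical.decEq (Clause V Fn P)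
  constructor
  · constructor
    · -- forward direction
      intro halg M hMNs hM0 σ hσ
      have key : ∀ k (Mi : Clause V Fn P), Visited L C' (Ns + Drest) Ns sel Mi → Mi ≤ M →
          Multiset.card M - Multiset.card Mi ≤ k →
          Clause.ValidEF (resOf L C' (Ns + Drest) M σ) := by
        intro k
        induction k with
        | zero =>
          intro Mi hvis hle hcard
          rcases forward_step hNs hsel halg hMNs hσ.1 hvis hle with h | ⟨_, h2, h3⟩
          · exact h
          · exfalso
            have e1 := Multiset.card_le_card h2
            have e2 := Multiset.card_le_card hle
            rw [Multiset.card_add] at e1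
            have e3 : 0 < Multiset.card (extSet L C' (Ns + Drest) Ns sel Mi) :=
              Multiset.card_pos.2 h3
            omega
        | succ k ih =>
          intro Mi hvis hle hcard
          rcases forward_step hNs hsel halg hMNs hσ.1 hvis hle with h | ⟨h1, h2, h3⟩
          · exact h
          · refine ih _ h1 h2 ?_
            have e1 := Multiset.card_le_card h2
            rw [Multiset.card_add] at e1 ⊢
            have e3 : 0 < Multiset.card (extSet L C' (Ns + Drest) Ns sel Mi) :=
              Multiset.card_pos.2 h3
            omega
      obtain ⟨N, hN⟩ := Multiset.exists_mem_of_ne_zero hM0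
      exact key (Multiset.card M) {N} (Visited.init N (Multiset.mem_of_le hMNs hN))
        (Multiset.singleton_le.2 hN) (by omega)
    · -- backward direction
      intro hres M hvis hex
      have inv := visited_inv hvis
      exact hres M inv.1 inv.2 (sel M) (hsel M hex)
  · -- cardinality bound
    have hsubset : {M : Clause V Fn P | Visited L C' (Ns + Drest) Ns sel M} ⊆
        ↑((Ns.toFinset ×ˢ Finset.range (Multiset.card Ns)).image
          (fun p => (fun X => X + extSet L C' (Ns + Drest) Ns sel X)^[p.2]
            ({p.1} : Clause V Fn P))) := by
      intro M hvis
      obtain ⟨N, hN, k, _, hk2, hEq⟩ := visited_rep hvis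
      simp only [Finset.coe_image, Set.mem_image, Finset.mem_coe, Finset.mem_product,
        Finset.mem_range, Multiset.mem_toFinset]
      exact ⟨(N, k), ⟨hN, by omega⟩, hEq.symm⟩
    refine (Set.ncard_le_ncard hsubset (Finset.finite_toSet _)).trans ?_
    rw [Set.ncard_coe_finset]
    refine Finset.card_image_le.trans ?_
    rw [Finset.card_product, Finset.card_range]
    exact Nat.mul_le_mul_right _ (Multiset.toFinset_card_le Ns)
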